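/- Let l ≥ 4 with l ≡ 0 (mod 3), let H be the graph obtained from the cycle C = u_1 u_2 ... u_l u_1 by adding two new vertices v_1, v_2 and the edges u_1 v_1 and u_2 v_2, and let P be the path v_1 u_1 u_2 v_2 in H. Let f be a path-extendable 6-L(2,1)-labeling of P with {f(u_1), f(u_2)} ∩ {1, 3, 5} ≠ ∅. Then f can be extended to a 6-L(2,1)-labeling f_1 of H such that the restriction of f_1 to the path C − u_1u_2 is a path-extendable 6-L(2,1)-labeling of that path. -/

import Mathlib

/-- An L(2,1)-labeling of a simple graph: adjacent vertices get labels differing by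
at least 2, and vertices at distance exactly 2 get distinct labels. -/
def IsL21Labeling {V : Type*} (G : SimpleGraph V) (f : V → ℕ) : Prop :=
  (∀ a b : V, G.Adj a b → 2 ≤ ((f a : ℤ) - (f b : ℤ)).natAbs) ∧
  (∀ a b : V, G.dist a b = 2 → f a ≠ f b)

/-- A k-L(2,1)-labeling: an L(2,1)-labeling with all labels in {0, 1, ..., k}. -/
def IsKL21Labeling {V : Type*} (G : SimpleGraph V) (k : ℕ) (f : V → ℕ) : Prop :=
  IsL21Labeling G f ∧ ∀ a : V, f a ≤ k

/-- The λ-number of a graph: the least k such that G admits a k-L(2,1)-labeling. -/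
noncomputable def lambdaNumber {V : Type*} (G : SimpleGraph V) : ℕ :=
  sInf {k : ℕ | ∃ f : V → ℕ, IsKL21Labeling G k f}

/-- The path graph on `Fin n`, with edges between consecutive indices. -/
def PathGraph (n : ℕ) : SimpleGraph (Fin n) :=
  SimpleGraph.fromRel (fun p q => (p : ℕ) + 1 = (q : ℕ))

/-- The vertex type of members of 𝓗(P) for P = u u_1 ... u_l v :
`Sum.inl 0` is u, `Sum.inl i` is u_i for 1 ≤ i ≤ l, `Sum.inl (l+1)` is v,
and `Sum.inr (i, false)`, `Sum.inr (i, true)` are the (at most two) new internal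
vertices of a path attached at the pair (u_i, u_{i+1}). -/
abbrev PVert (l : ℕ) := Fin (l + 2) ⊕ (ℕ × Bool)

/-- An attachment specification `D` : at position `i`, `none` means no attached path,
`some false` means a path of length 2 (one new vertex), `some true` means a path of
length 3 (two new vertices). Valid specs attach only at pairs (u_i, u_{i+1}) with
1 ≤ i ≤ l-1, and no two attachment positions are consecutive (i.e. gaps ≥ 2). -/
def ValidD (l : ℕ) (D : ℕ → Option Bool) : Prop :=
  (∀ i, (D i).isSome → 1 ≤ i ∧ i + 1 ≤ l) ∧
  (∀ i, ¬ ((D i).isSome ∧ (D (i + 1)).isSome))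

/-- The edge relation (up to symmetrization) of the member of 𝓗(P) described by `D`. -/
def attachRel (l : ℕ) (D : ℕ → Option Bool) : PVert l → PVert l → Prop
  | Sum.inl p, Sum.inl q => (p : ℕ) + 1 = (q : ℕ)
  | Sum.inl p, Sum.inr (i, k) =>
      ((p : ℕ) = i ∧ k = false) ∨
      ((p : ℕ) = i + 1 ∧ ((D i = some false ∧ k = false) ∨ (D i = some true ∧ k = true)))
  | Sum.inr (i, k), Sum.inr (j, m) => i = j ∧ D i = some true ∧ k = false ∧ m = true
  | _, _ => False

def AttachG (l : ℕ) (D : ℕ → Option Bool) : SimpleGraph (PVert l) :=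
  SimpleGraph.fromRel (attachRel l D)

/-- The vertices actually present in the member of 𝓗(P) described by `D`. -/
def Active {l : ℕ} (D : ℕ → Option Bool) : PVert l → Prop
  | Sum.inl _ => True
  | Sum.inr (i, k) => (D i).isSome ∧ (k = false ∨ D i = some true)

/-- `f` extends to a 6-L(2,1)-labeling of the member of 𝓗(P) described by `D`. -/
def ExtendsToAttach (l : ℕ) (D : ℕ → Option Bool) (f : Fin (l + 2) → ℕ) : Prop :=
  ∃ g : ↥{w : PVert l | Active D w} → ℕ,
    IsKL21Labeling ((AttachG l D).induce {w : PVert l | Active D w}) 6 g ∧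
    ∀ p : Fin (l + 2), g ⟨Sum.inl p, trivial⟩ = f p

/-- A path-extendable 6-L(2,1)-labeling of the path P = u u_1 ... u_l v :
a 6-L(2,1)-labeling of P that extends to a 6-L(2,1)-labeling of every H ∈ 𝓗(P). -/
def PathExtendable (l : ℕ) (f : Fin (l + 2) → ℕ) : Prop :=
  IsKL21Labeling (PathGraph (l + 2)) 6 f ∧
  ∀ D : ℕ → Option Bool, ValidD l D → ExtendsToAttach l D f

/-- The graph H : the cycle u_1 ... u_l (vertex `Sum.inl j` is u_{j+1}) together with
two pendant vertices v_1 = `Sum.inr false` adjacent to u_1 and v_2 = `Sum.inr true`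
adjacent to u_2. -/
def hcycRel (l : ℕ) : (Fin l ⊕ Bool) → (Fin l ⊕ Bool) → Prop
  | Sum.inl p, Sum.inl q => ((p : ℕ) + 1) % l = (q : ℕ)
  | Sum.inr false, Sum.inl p => (p : ℕ) = 0
  | Sum.inr true, Sum.inl p => (p : ℕ) = 1
  | _, _ => False

def HCyc (l : ℕ) : SimpleGraph (Fin l ⊕ Bool) := SimpleGraph.fromRel (hcycRel l)


def far (x y : ℕ) : Prop := x + 2 ≤ y ∨ y + 2 ≤ x
instance : ∀ x y, Decidable (far x y) := fun _ _ => inferInstanceAs (Decidable (_ ∨ _))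

lemma far_symm {x y : ℕ} (h : far x y) : far y x := by unfold far at *; omega
lemma far_ne {x y : ℕ} (h : far x y) : x ≠ y := by unfold far at h; omega
lemma natAbs_of_far {x y : ℕ} (h : far x y) : 2 ≤ ((x:ℤ) - (y:ℤ)).natAbs := by
  unfold far at h; omega
lemma far_of_natAbs {x y : ℕ} (h : 2 ≤ ((x:ℤ) - (y:ℤ)).natAbs) : far x y := by
  unfold far; omega

def Win (p x y q : ℕ) : Prop :=
  (∃ s : Fin 7, far s x ∧ far s y ∧ (s:ℕ) ≠ p ∧ (s:ℕ) ≠ q) ∧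
  (∃ w1 w2 : Fin 7, far w1 x ∧ (w1:ℕ) ≠ p ∧ (w1:ℕ) ≠ y ∧
    far w2 y ∧ (w2:ℕ) ≠ q ∧ (w2:ℕ) ≠ x ∧ far w1 w2)
instance (p x y q : ℕ) : Decidable (Win p x y q) := inferInstanceAs (Decidable (_ ∧ _))

lemma dist_two_of {V : Type*} {G : SimpleGraph V} {x y z : V} (hxy : x ≠ y) (hna : ¬ G.Adj x y)
    (h1 : G.Adj x z) (h2 : G.Adj z y) : G.dist x y = 2 := by
  have hle : G.dist x y ≤ 2 := by
    have := G.dist_le (h1.toWalk.append h2.toWalk)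
    simpa using this
  have h0 : G.dist x y ≠ 0 := by
    simp only [ne_eq, SimpleGraph.dist_eq_zero_iff_eq_or_not_reachable, not_or]
    push_neg
    exact ⟨hxy, ⟨h1.toWalk.append h2.toWalk⟩⟩
  have h1' : G.dist x y ≠ 1 := by
    simp only [ne_eq, SimpleGraph.dist_eq_one_iff_adj]; exact hna
  omega

lemma common_of_dist_two {V : Type*} {G : SimpleGraph V} {x y : V} (h : G.dist x y = 2) :
    x ≠ y ∧ ¬ G.Adj x y ∧ ∃ z, G.Adj x z ∧ G.Adj z y := by
  have h0 : G.dist x y ≠ 0 := by omega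
  obtain ⟨p, hp⟩ := SimpleGraph.exists_walk_of_dist_ne_zero h0
  rw [h] at hp
  have hxy : x ≠ y := by
    rintro rfl; rw [SimpleGraph.dist_self] at h; omega
  have hna : ¬ G.Adj x y := by
    intro ha
    have := SimpleGraph.dist_eq_one_iff_adj.mpr ha
    omega
  refine ⟨hxy, hna, ?_⟩
  cases p with
  | nil => simp at hp
  | cons h1 q =>
    cases q with
    | nil => simp at hp
    | cons h2 q' =>
      cases q' with
      | nil => exact ⟨_, h1, h2⟩
      | cons h3 q'' => simp [SimpleGraph.Walk.length_cons] at hp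

def attachLab (l' : ℕ) (s : ℕ → ℕ) (D : ℕ → Option Bool) (V : ℕ → ℕ × ℕ × ℕ) :
    PVert l' → ℕ :=
  Sum.elim (fun p : Fin (l'+2) => s ↑p)
    (fun ik : ℕ × Bool =>
      if D ik.1 = some true then (bif ik.2 then (V ik.1).2.2 else (V ik.1).2.1)
      else (V ik.1).1)

lemma attachLab_inl (l' : ℕ) (s : ℕ → ℕ) (D : ℕ → Option Bool) (V : ℕ → ℕ × ℕ × ℕ)
    (p : Fin (l'+2)) : attachLab l' s D V (Sum.inl p) = s ↑p := rfl

lemma attachLab_false (l' : ℕ) (s : ℕ → ℕ) (D : ℕ → Option Bool) (V : ℕ → ℕ × ℕ × ℕ)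
    (i : ℕ) (k : Bool) (h : D i = some false) :
    attachLab l' s D V (Sum.inr (i, k)) = (V i).1 := by
  show (if D i = some true then _ else _) = _
  rw [if_neg (by rw [h]; simp)]

lemma attachLab_t1 (l' : ℕ) (s : ℕ → ℕ) (D : ℕ → Option Bool) (V : ℕ → ℕ × ℕ × ℕ)
    (i : ℕ) (h : D i = some true) :
    attachLab l' s D V (Sum.inr (i, false)) = (V i).2.1 := by
  show (if D i = some true then _ else _) = _
  rw [if_pos h]; rfl

lemma attachLab_t2 (l' : ℕ) (s : ℕ → ℕ) (D : ℕ → Option Bool) (V : ℕ → ℕ × ℕ × ℕ)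
    (i : ℕ) (h : D i = some true) :
    attachLab l' s D V (Sum.inr (i, true)) = (V i).2.2 := by
  show (if D i = some true then _ else _) = _
  rw [if_pos h]; rfl

theorem extendAttach (l' : ℕ) (s : ℕ → ℕ)
    (hle : ∀ j, s j ≤ 6)
    (hadj : ∀ j, j + 2 ≤ l' + 2 → far (s j) (s (j+1)))
    (hd2 : ∀ j, j + 3 ≤ l' + 2 → s j ≠ s (j+2))
    (hWin : ∀ i, 1 ≤ i → i + 1 ≤ l' → Win (s (i-1)) (s i) (s (i+1)) (s (i+2)))
    (D : ℕ → Option Bool) (hD : ValidD l' D) :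
    ExtendsToAttach l' D (fun p : Fin (l'+2) => s ↑p) := by
  classical
  have hch : ∀ i, ∃ v : ℕ × ℕ × ℕ,
      1 ≤ i → i + 1 ≤ l' →
      (v.1 ≤ 6 ∧ far v.1 (s i) ∧ far v.1 (s (i+1)) ∧ v.1 ≠ s (i-1) ∧ v.1 ≠ s (i+2)) ∧
      (v.2.1 ≤ 6 ∧ far v.2.1 (s i) ∧ v.2.1 ≠ s (i-1) ∧ v.2.1 ≠ s (i+1)) ∧
      (v.2.2 ≤ 6 ∧ far v.2.2 (s (i+1)) ∧ v.2.2 ≠ s (i+2) ∧ v.2.2 ≠ s i) ∧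
      far v.2.1 v.2.2 := by
    intro i
    by_cases h : 1 ≤ i ∧ i + 1 ≤ l'
    · obtain ⟨⟨t, ht1, ht2, ht3, ht4⟩, ⟨w1, w2, hw1x, hw1p, hw1y, hw2y, hw2q, hw2x, hw12⟩⟩ :=
        hWin i h.1 h.2
      refine ⟨((t:ℕ), (w1:ℕ), (w2:ℕ)), fun _ _ =>
        ⟨⟨?_, ht1, ht2, ht3, ht4⟩, ⟨?_, hw1x, hw1p, hw1y⟩,
         ⟨?_, hw2y, hw2q, hw2x⟩, hw12⟩⟩
      · show (t:ℕ) ≤ 6; have := t.isLt; omega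
      · show (w1:ℕ) ≤ 6; have := w1.isLt; omega
      · show (w2:ℕ) ≤ 6; have := w2.isLt; omega
    · exact ⟨(0,0,0), fun h1 h2 => absurd ⟨h1, h2⟩ h⟩
  choose V hV using hch
  have hAdjIff : ∀ x y : PVert l', (AttachG l' D).Adj x y ↔
      x ≠ y ∧ (attachRel l' D x y ∨ attachRel l' D y x) :=
    fun x y => SimpleGraph.fromRel_adj _ x y
  -- neighbor extraction lemmas
  have nbrIL : ∀ (p q : Fin (l'+2)), (AttachG l' D).Adj (Sum.inl p) (Sum.inl q) →
      ((p:ℕ) + 1 = (q:ℕ) ∨ (q:ℕ) + 1 = (p:ℕ)) := by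
    intro p q h
    rw [hAdjIff] at h
    rcases h.2 with h' | h'
    · simp only [attachRel] at h'; exact Or.inl h'
    · simp only [attachRel] at h'; exact Or.inr h'
  have nbrIR : ∀ (p : Fin (l'+2)) (i : ℕ) (k : Bool),
      (AttachG l' D).Adj (Sum.inl p) (Sum.inr (i, k)) →
      (((p:ℕ) = i ∧ k = false) ∨
        ((p:ℕ) = i + 1 ∧ ((D i = some false ∧ k = false) ∨ (D i = some true ∧ k = true)))) := by
    intro p i k h
    rw [hAdjIff] at h
    rcases h.2 with h' | h'
    · simp only [attachRel] at h'; exact h'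
    · simp only [attachRel] at h'
  have nbrRR : ∀ (i : ℕ) (k : Bool) (j : ℕ) (m : Bool),
      (AttachG l' D).Adj (Sum.inr (i, k)) (Sum.inr (j, m)) →
      i = j ∧ D i = some true ∧ ((k = false ∧ m = true) ∨ (k = true ∧ m = false)) := by
    intro i k j m h
    rw [hAdjIff] at h
    rcases h.2 with h' | h'
    · simp only [attachRel] at h'; exact ⟨h'.1, h'.2.1, Or.inl ⟨h'.2.2.1, h'.2.2.2⟩⟩
    · simp only [attachRel] at h'
      refine ⟨h'.1.symm, ?_, Or.inr ⟨h'.2.2.2, h'.2.2.1⟩⟩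
      rw [← h'.1]; exact h'.2.1
  have main : ∀ u w : PVert l', Active D w → attachRel l' D u w →
      far (attachLab l' s D V u) (attachLab l' s D V w) := by
    rintro (p | ⟨i, k⟩) (q | ⟨j, m⟩) hw hrel
    · simp only [attachRel] at hrel
      simp only [attachLab_inl]
      rw [← hrel]
      exact hadj ↑p (by have := q.isLt; omega)
    · simp only [attachRel] at hrel
      simp only [Active] at hw
      obtain ⟨hsome, -⟩ := hw
      obtain ⟨hj1, hj2⟩ := hD.1 j hsome
      obtain ⟨⟨hT6, hTx, hTy, hTp, hTq⟩, ⟨hW16, hW1x, hW1p, hW1y⟩,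
        ⟨hW26, hW2y, hW2q, hW2x⟩, hW12⟩ := hV j hj1 hj2
      simp only [attachLab_inl]
      rcases hrel with ⟨hp, rfl⟩ | ⟨hp, hcl⟩
      · rcases Option.isSome_iff_exists.mp hsome with ⟨bb, hbb⟩
        cases bb
        · rw [attachLab_false l' s D V j false hbb, hp]
          exact far_symm hTx
        · rw [attachLab_t1 l' s D V j hbb, hp]
          exact far_symm hW1x
      · rcases hcl with ⟨hDj, rfl⟩ | ⟨hDj, rfl⟩
        · rw [attachLab_false l' s D V j false hDj, hp]
          exact far_symm hTy
        · rw [attachLab_t2 l' s D V j hDj, hp]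
          exact far_symm hW2y
    · simp only [attachRel] at hrel
    · simp only [attachRel] at hrel
      obtain ⟨rfl, hDi, rfl, rfl⟩ := hrel
      obtain ⟨hi1, hi2⟩ := hD.1 i (by rw [hDi]; rfl)
      obtain ⟨-, -, -, hW12⟩ := hV i hi1 hi2
      rw [attachLab_t1 l' s D V i hDi, attachLab_t2 l' s D V i hDi]
      exact hW12
  have core : ∀ (p : Fin (l'+2)) (w z : PVert l'), Active D w →
      Sum.inl p ≠ w → ¬ (AttachG l' D).Adj (Sum.inl p) w →
      (AttachG l' D).Adj (Sum.inl p) z → (AttachG l' D).Adj z w →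
      s ↑p ≠ attachLab l' s D V w := by
    rintro p (q | ⟨i, k⟩) (mz | ⟨n, kz⟩) hw hne hnadj h1 h2
    · have hp := nbrIL p mz h1
      have hq := nbrIL mz q h2
      have hpq : (p:ℕ) ≠ (q:ℕ) := fun h => hne (congrArg Sum.inl (Fin.val_injective h))
      simp only [attachLab_inl]
      rcases hp with hp | hp <;> rcases hq with hq | hq
      · have hq2 : (q:ℕ) = ↑p + 2 := by omega
        rw [hq2]; exact hd2 ↑p (by have := q.isLt; omega)
      · omega
      · omega
      · have hp2 : (p:ℕ) = ↑q + 2 := by omega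
        rw [hp2]; exact (hd2 ↑q (by have := p.isLt; omega)).symm
    · have hx := nbrIR p n kz h1
      have hy := nbrIR q n kz h2.symm
      have hpq : (p:ℕ) ≠ (q:ℕ) := fun h => hne (congrArg Sum.inl (Fin.val_injective h))
      rcases hx with ⟨hp, rfl⟩ | ⟨hp, hclx⟩ <;> rcases hy with ⟨hq, hkz⟩ | ⟨hq, hcly⟩
      · omega
      · exact absurd ((hAdjIff _ _).mpr ⟨hne, Or.inl (by simp only [attachRel]; omega)⟩) hnadj
      · exact absurd ((hAdjIff _ _).mpr ⟨hne, Or.inr (by simp only [attachRel]; omega)⟩) hnadj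
      · omega
    · have hp := nbrIL p mz h1
      have hy := nbrIR mz i k h2
      simp only [Active] at hw
      obtain ⟨hsome, -⟩ := hw
      obtain ⟨hi1, hi2⟩ := hD.1 i hsome
      obtain ⟨⟨hT6, hTx, hTy, hTp, hTq⟩, ⟨hW16, hW1x, hW1p, hW1y⟩,
        ⟨hW26, hW2y, hW2q, hW2x⟩, hW12⟩ := hV i hi1 hi2
      rcases hy with ⟨hmi, rfl⟩ | ⟨hmi, hcl⟩
      · rcases Option.isSome_iff_exists.mp hsome with ⟨bb, hbb⟩
        cases bb
        · rw [attachLab_false l' s D V i false hbb]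
          rcases hp with hp | hp
          · have hh : (p:ℕ) = i - 1 := by omega
            rw [hh]; exact Ne.symm hTp
          · refine absurd ((hAdjIff _ _).mpr ⟨hne, Or.inl ?_⟩) hnadj
            simp only [attachRel]
            right
            refine ⟨by omega, ?_⟩
            simp [hbb]
        · rw [attachLab_t1 l' s D V i hbb]
          rcases hp with hp | hp
          · have hh : (p:ℕ) = i - 1 := by omega
            rw [hh]; exact Ne.symm hW1p
          · have hh : (p:ℕ) = i + 1 := by omega
            rw [hh]; exact Ne.symm hW1y
      · rcases hcl with ⟨hDi, rfl⟩ | ⟨hDi, rfl⟩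
        · rw [attachLab_false l' s D V i false hDi]
          rcases hp with hp | hp
          · refine absurd ((hAdjIff _ _).mpr ⟨hne, Or.inl ?_⟩) hnadj
            simp only [attachRel]
            left
            exact ⟨by omega, by trivial⟩
          · have hh : (p:ℕ) = i + 2 := by omega
            rw [hh]; exact Ne.symm hTq
        · rw [attachLab_t2 l' s D V i hDi]
          rcases hp with hp | hp
          · have hh : (p:ℕ) = i := by omega
            rw [hh]; exact Ne.symm hW2x
          · have hh : (p:ℕ) = i + 2 := by omega
            rw [hh]; exact Ne.symm hW2q
    · have hx := nbrIR p n kz h1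
      obtain ⟨rfl, hDn, hok⟩ := nbrRR n kz i k h2
      obtain ⟨hi1, hi2⟩ := hD.1 n (by rw [hDn]; rfl)
      obtain ⟨⟨hT6, hTx, hTy, hTp, hTq⟩, ⟨hW16, hW1x, hW1p, hW1y⟩,
        ⟨hW26, hW2y, hW2q, hW2x⟩, hW12⟩ := hV n hi1 hi2
      rcases hok with ⟨rfl, rfl⟩ | ⟨rfl, rfl⟩
      · rcases hx with ⟨hp, -⟩ | ⟨hp, hclx⟩
        · rw [attachLab_t2 l' s D V n hDn, hp]
          exact Ne.symm hW2x
        · rcases hclx with ⟨hq, -⟩ | ⟨-, habs⟩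
          · rw [hq] at hDn; exact absurd hDn (by simp)
          · exact absurd habs (by simp)
      · rcases hx with ⟨-, habs⟩ | ⟨hp, hclx⟩
        · exact absurd habs (by simp)
        · rcases hclx with ⟨hq, -⟩ | ⟨-, -⟩
          · rw [hq] at hDn; exact absurd hDn (by simp)
          · rw [attachLab_t1 l' s D V n hDn, hp]
            exact Ne.symm hW1y
  have coreRR : ∀ (i : ℕ) (k : Bool) (j : ℕ) (m : Bool) (z : PVert l'),
      Active (l := l') D (Sum.inr (i,k)) → Active (l := l') D (Sum.inr (j,m)) →
      (Sum.inr (i,k) : PVert l') ≠ Sum.inr (j,m) →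
      (AttachG l' D).Adj (Sum.inr (i,k)) z → (AttachG l' D).Adj z (Sum.inr (j,m)) → False := by
    rintro i k j m (mz | ⟨n, kz⟩) hak haj hne h1 h2
    · have hx := nbrIR mz i k h1.symm
      have hy := nbrIR mz j m h2
      simp only [Active] at hak haj
      rcases hx with ⟨hmi, rfl⟩ | ⟨hmi, hclx⟩ <;> rcases hy with ⟨hmj, rfl⟩ | ⟨hmj, hcly⟩
      · exact hne (by rw [show i = j by omega])
      · exact hD.2 j ⟨haj.1, by rw [show j + 1 = i by omega]; exact hak.1⟩
      · exact hD.2 i ⟨hak.1, by rw [show i + 1 = j by omega]; exact haj.1⟩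
      · have hij : i = j := by omega
        subst hij
        rcases hclx with ⟨hDf, rfl⟩ | ⟨hDt, rfl⟩ <;> rcases hcly with ⟨hDf2, h4⟩ | ⟨hDt2, h4⟩
        · exact hne (by rw [h4])
        · rw [hDf] at hDt2; exact absurd hDt2 (by simp)
        · rw [hDf2] at hDt; exact absurd hDt (by simp)
        · exact hne (by rw [h4])
    · obtain ⟨rfl, hDi, hok1⟩ := nbrRR i k n kz h1
      obtain ⟨rfl, -, hok2⟩ := nbrRR i kz j m h2
      rcases hok1 with ⟨rfl, rfl⟩ | ⟨rfl, rfl⟩ <;> rcases hok2 with ⟨h3, h4⟩ | ⟨h3, h4⟩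
      · simp at h3
      · exact hne (by rw [h4])
      · exact hne (by rw [h4])
      · simp at h3
  have main2 : ∀ x y z : PVert l', Active D x → Active D y →
      x ≠ y → ¬ (AttachG l' D).Adj x y →
      (AttachG l' D).Adj x z → (AttachG l' D).Adj z y →
      attachLab l' s D V x ≠ attachLab l' s D V y := by
    rintro (p | ⟨i,k⟩) y z hx hy hne hnadj h1 h2
    · exact core p y z hy hne hnadj h1 h2
    · rcases y with q | ⟨j,m⟩
      · exact (core q (Sum.inr (i,k)) z hx (Ne.symm hne) (fun h => hnadj h.symm)
          h2.symm h1.symm).symm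
      · exact (coreRR i k j m z hx hy hne h1 h2).elim
  refine ⟨fun v => attachLab l' s D V v.1, ⟨⟨?_, ?_⟩, ?_⟩, fun p => rfl⟩
  · rintro ⟨x, hx⟩ ⟨y, hy⟩ hxy
    have hxy' : (AttachG l' D).Adj x y := hxy
    rw [hAdjIff] at hxy'
    rcases hxy'.2 with h | h
    · exact natAbs_of_far (main x y hy h)
    · exact natAbs_of_far (far_symm (main y x hx h))
  · rintro ⟨x, hx⟩ ⟨y, hy⟩ hdist
    obtain ⟨hne, hnadj, ⟨⟨z, hz⟩, h1, h2⟩⟩ := common_of_dist_two hdist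
    exact main2 x y z hx hy (fun h => hne (Subtype.ext h)) (fun h => hnadj h) h1 h2
  · rintro ⟨x, hx⟩
    rcases x with p | ⟨i,k⟩
    · exact hle ↑p
    · have hx' : Active (l := l') D (Sum.inr (i,k)) := hx
      simp only [Active] at hx'
      obtain ⟨hsome, -⟩ := hx'
      obtain ⟨hi1, hi2⟩ := hD.1 i hsome
      obtain ⟨⟨hT6, -⟩, ⟨hW16, -⟩, ⟨hW26, -⟩, -⟩ := hV i hi1 hi2
      show (if D i = some true then (bif k then (V i).2.2 else (V i).2.1) else (V i).1) ≤ 6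
      split
      · cases k
        · exact hW16
        · exact hW26
      · exact hT6

def Good (a b f0 f3 d c p0 p1 : ℕ) : Prop :=
  d ≤ 6 ∧ c ≤ 6 ∧ p0 ≤ 6 ∧ p1 ≤ 6 ∧
  far b d ∧ far d p0 ∧ far p0 p1 ∧ far p1 c ∧ far c p0 ∧ far c a ∧
  a ≠ d ∧ b ≠ p0 ∧ d ≠ p1 ∧ p1 ≠ a ∧ c ≠ b ∧ f0 ≠ c ∧ f3 ≠ d ∧
  Win b d p0 p1 ∧ Win d p0 p1 c ∧ Win p0 p1 c p0 ∧ Win p0 p1 c a ∧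
  Win p1 c p0 p1 ∧ Win c p0 p1 c

instance (a b f0 f3 d c p0 p1 : ℕ) : Decidable (Good a b f0 f3 d c p0 p1) :=
  inferInstanceAs (Decidable (_ ∧ _))

def seqq (a b d c p0 p1 : ℕ) (j : ℕ) : ℕ :=
  if j = 0 then a else if j = 1 then b else if j = 2 then d
  else if j % 3 = 2 then c else if j % 3 = 0 then p0 else p1

section seqfacts

variable {a b d c p0 p1 A B : ℕ} {l : ℕ}

lemma seqq_0 : seqq a b d c p0 p1 0 = a := rfl
lemma seqq_1 : seqq a b d c p0 p1 1 = b := rfl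
lemma seqq_2 : seqq a b d c p0 p1 2 = d := rfl
lemma seqq_c {j : ℕ} (h1 : 3 ≤ j) (h2 : j % 3 = 2) : seqq a b d c p0 p1 j = c := by
  unfold seqq
  rw [if_neg (by omega), if_neg (by omega), if_neg (by omega), if_pos h2]
lemma seqq_p0 {j : ℕ} (h1 : 3 ≤ j) (h2 : j % 3 = 0) : seqq a b d c p0 p1 j = p0 := by
  unfold seqq
  rw [if_neg (by omega), if_neg (by omega), if_neg (by omega), if_neg (by omega), if_pos h2]
lemma seqq_p1 {j : ℕ} (h1 : 3 ≤ j) (h2 : j % 3 = 1) : seqq a b d c p0 p1 j = p1 := by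
  unfold seqq
  rw [if_neg (by omega), if_neg (by omega), if_neg (by omega), if_neg (by omega),
    if_neg (by omega)]

lemma seqq_le (hG : Good a b A B d c p0 p1) (ha : a ≤ 6) (hb : b ≤ 6) :
    ∀ j, seqq a b d c p0 p1 j ≤ 6 := by
  obtain ⟨h1, h2, h3, h4, -⟩ := hG
  intro j
  unfold seqq
  split_ifs <;> omega

lemma seqq_adj (hl : 6 ≤ l) (hm : l % 3 = 0) (hG : Good a b A B d c p0 p1) (hab : far a b) :
    ∀ j k, j < l → k < l → (j + 1 = k ∨ j + 1 = k + l) →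
      far (seqq a b d c p0 p1 j) (seqq a b d c p0 p1 k) := by
  obtain ⟨h1, h2, h3, h4, fbd, fdp0, f01, f1c, fcp0, fca, -⟩ := hG
  intro j k hj hk hjk
  rcases hjk with hjk | hjk
  · subst hjk
    by_cases e0 : j = 0
    · subst e0; rw [seqq_0, seqq_1]; exact hab
    by_cases e1 : j = 1
    · subst e1; rw [seqq_1, seqq_2]; exact fbd
    by_cases e2 : j = 2
    · subst e2; rw [seqq_2, seqq_p0 (by omega) (by omega)]; exact fdp0
    have h3j : 3 ≤ j := by omega
    have : j % 3 = 0 ∨ j % 3 = 1 ∨ j % 3 = 2 := by omega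
    rcases this with h | h | h
    · rw [seqq_p0 h3j h, seqq_p1 (by omega) (by omega)]; exact f01
    · rw [seqq_p1 h3j h, seqq_c (by omega) (by omega)]; exact f1c
    · rw [seqq_c h3j h, seqq_p0 (by omega) (by omega)]; exact fcp0
  · -- wrap: j = l-1, k = 0
    have hj' : j = l - 1 := by omega
    have hk' : k = 0 := by omega
    subst hj'; subst hk'
    rw [seqq_0, seqq_c (by omega) (by omega)]
    exact fca

lemma seqq_d2 (hl : 6 ≤ l) (hm : l % 3 = 0) (hG : Good a b A B d c p0 p1) :
    ∀ j k, j < l → k < l → (j + 2 = k ∨ j + 2 = k + l) →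
      seqq a b d c p0 p1 j ≠ seqq a b d c p0 p1 k := by
  obtain ⟨h1, h2, h3, h4, fbd, fdp0, f01, f1c, fcp0, fca,
    nad, nbp0, ndp1, np1a, ncb, -⟩ := hG
  intro j k hj hk hjk
  rcases hjk with hjk | hjk
  · subst hjk
    by_cases e0 : j = 0
    · subst e0; rw [seqq_0, seqq_2]; exact nad
    by_cases e1 : j = 1
    · subst e1; rw [seqq_1, seqq_p0 (by omega) (by omega)]; exact nbp0
    by_cases e2 : j = 2
    · subst e2; rw [seqq_2, seqq_p1 (by omega) (by omega)]; exact ndp1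
    have h3j : 3 ≤ j := by omega
    have : j % 3 = 0 ∨ j % 3 = 1 ∨ j % 3 = 2 := by omega
    rcases this with h | h | h
    · rw [seqq_p0 h3j h, seqq_c (by omega) (by omega)]; exact Ne.symm (far_ne fcp0)
    · rw [seqq_p1 h3j h, seqq_p0 (by omega) (by omega)]; exact Ne.symm (far_ne f01)
    · rw [seqq_c h3j h, seqq_p1 (by omega) (by omega)]; exact Ne.symm (far_ne f1c)
  · -- wrap : j = l-2 & k = 0, or j = l-1 & k = 1
    by_cases e : j = l - 2
    · have hk' : k = 0 := by omega
      subst e; subst hk'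
      rw [seqq_0, seqq_p1 (by omega) (by omega)]
      exact np1a
    · have hj' : j = l - 1 := by omega
      have hk' : k = 1 := by omega
      subst hj'; subst hk'
      rw [seqq_1, seqq_c (by omega) (by omega)]
      exact ncb

lemma seqq_win (hl : 6 ≤ l) (hm : l % 3 = 0) (hG : Good a b A B d c p0 p1) :
    ∀ j q, 2 ≤ j → j ≤ l - 2 → ((j + 2 = q ∧ j ≤ l - 3) ∨ (j = l - 2 ∧ q = 0)) →
      Win (seqq a b d c p0 p1 (j-1)) (seqq a b d c p0 p1 j)
        (seqq a b d c p0 p1 (j+1)) (seqq a b d c p0 p1 q) := by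
  obtain ⟨h1, h2, h3, h4, fbd, fdp0, f01, f1c, fcp0, fca,
    nad, nbp0, ndp1, np1a, ncb, nAc, nBd, w2, w3, wi1, wr, wi2, wi0⟩ := hG
  intro j q hj2 hjl hq
  rcases hq with ⟨hq, hjl3'⟩ | ⟨hj, hq⟩
  · subst hq
    by_cases e2 : j = 2
    · subst e2
      rw [seqq_1, seqq_2, seqq_p0 (by omega) (by omega), seqq_p1 (by omega) (by omega)]
      exact w2
    by_cases e3 : j = 3
    · subst e3
      rw [seqq_2, seqq_p0 (by omega) (by omega), seqq_p1 (by omega) (by omega),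
        seqq_c (by omega) (by omega)]
      exact w3
    have h4j : 4 ≤ j := by omega
    have hjl3 : j + 2 ≤ l - 1 := by omega
    clear hjl3'
    have : j % 3 = 0 ∨ j % 3 = 1 ∨ j % 3 = 2 := by omega
    rcases this with h | h | h
    · rw [seqq_c (by omega) (by omega), seqq_p0 (by omega) h,
        seqq_p1 (by omega) (by omega), seqq_c (by omega) (by omega)]
      exact wi0
    · rw [seqq_p0 (by omega) (by omega), seqq_p1 (by omega) h,
        seqq_c (by omega) (by omega), seqq_p0 (by omega) (by omega)]
      exact wi1
    · rw [seqq_p1 (by omega) (by omega), seqq_c (by omega) h,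
        seqq_p0 (by omega) (by omega), seqq_p1 (by omega) (by omega)]
      exact wi2
  · subst hj; subst hq
    rw [seqq_0, seqq_p0 (by omega) (by omega), seqq_p1 (by omega) (by omega),
      seqq_c (by omega) (by omega)]
    exact wr

end seqfacts

lemma succ_mod_cases {p m l : ℕ} (hp : p < l) (hm : m < l) (h : (p+1) % l = m) :
    p + 1 = m ∨ (p = l - 1 ∧ m = 0) := by
  rcases Nat.lt_or_ge (p+1) l with h' | h'
  · left; rw [Nat.mod_eq_of_lt h'] at h; exact h
  · right
    have he : p + 1 = l := by omega
    rw [he, Nat.mod_self] at h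
    omega

theorem pathLab (n : ℕ) (s : ℕ → ℕ) (hle : ∀ j, s j ≤ 6)
    (hadj : ∀ j, j + 2 ≤ n → far (s j) (s (j+1)))
    (hd2 : ∀ j, j + 3 ≤ n → s j ≠ s (j+2)) :
    IsKL21Labeling (PathGraph n) 6 (fun p : Fin n => s ↑p) := by
  have hAdjIff : ∀ x y : Fin n, (PathGraph n).Adj x y ↔
      x ≠ y ∧ ((x:ℕ) + 1 = (y:ℕ) ∨ (y:ℕ) + 1 = (x:ℕ)) :=
    fun x y => SimpleGraph.fromRel_adj _ x y
  refine ⟨⟨?_, ?_⟩, fun p => hle ↑p⟩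
  · intro x y hxy
    rw [hAdjIff] at hxy
    rcases hxy.2 with h | h
    · refine natAbs_of_far ?_
      show far (s ↑x) (s ↑y)
      rw [← h]
      exact hadj ↑x (by have := y.isLt; omega)
    · refine natAbs_of_far (far_symm ?_)
      show far (s ↑y) (s ↑x)
      rw [← h]
      exact hadj ↑y (by have := x.isLt; omega)
  · intro x y hdist
    obtain ⟨hne, hnadj, z, h1, h2⟩ := common_of_dist_two hdist
    rw [hAdjIff] at h1 h2
    have hxy : (x:ℕ) ≠ (y:ℕ) := fun h => hne (Fin.val_injective h)
    show s ↑x ≠ s ↑y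
    rcases h1.2 with e1 | e1 <;> rcases h2.2 with e2 | e2
    · have hy : (y:ℕ) = ↑x + 2 := by omega
      rw [hy]
      exact hd2 ↑x (by have := y.isLt; omega)
    · omega
    · omega
    · have hx : (x:ℕ) = ↑y + 2 := by omega
      rw [hx]
      exact (hd2 ↑y (by have := x.isLt; omega)).symm

theorem cycLab (l : ℕ) (hl : 6 ≤ l) (hm : l % 3 = 0)
    (a b d c p0 p1 A B : ℕ) (hG : Good a b A B d c p0 p1)
    (ha : a ≤ 6) (hb : b ≤ 6) (hA : A ≤ 6) (hB : B ≤ 6)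
    (hab : far a b) (hAa : far A a) (hAb : A ≠ b) (hBb : far B b) (hBa : B ≠ a)
    (hAc : A ≠ c) (hBd : B ≠ d) :
    IsKL21Labeling (HCyc l) 6
      (Sum.elim (fun j : Fin l => seqq a b d c p0 p1 ↑j)
        (fun t : Bool => bif t then B else A)) := by
  have hAdjIff : ∀ x y : Fin l ⊕ Bool, (HCyc l).Adj x y ↔
      x ≠ y ∧ (hcycRel l x y ∨ hcycRel l y x) :=
    fun x y => SimpleGraph.fromRel_adj _ x y
  have hSadj := seqq_adj (A := A) (B := B) hl hm hG hab
  have hSd2 := seqq_d2 (A := A) (B := B) hl hm hG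
  have main : ∀ u w : Fin l ⊕ Bool, hcycRel l u w →
      far (Sum.elim (fun j : Fin l => seqq a b d c p0 p1 ↑j)
            (fun t : Bool => bif t then B else A) u)
          (Sum.elim (fun j : Fin l => seqq a b d c p0 p1 ↑j)
            (fun t : Bool => bif t then B else A) w) := by
    rintro (p | t) (q | t') hrel
    · simp only [hcycRel] at hrel
      have hc := succ_mod_cases p.isLt q.isLt hrel
      show far (seqq a b d c p0 p1 ↑p) (seqq a b d c p0 p1 ↑q)
      exact hSadj ↑p ↑q p.isLt q.isLt (by omega)
    · cases t' <;> simp only [hcycRel] at hrel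
    · cases t <;> simp only [hcycRel] at hrel
      · show far A (seqq a b d c p0 p1 ↑q)
        rw [hrel, seqq_0]; exact hAa
      · show far B (seqq a b d c p0 p1 ↑q)
        rw [hrel, seqq_1]; exact hBb
    · cases t <;> simp only [hcycRel] at hrel
  have nbrLL : ∀ p q : Fin l, (HCyc l).Adj (Sum.inl p) (Sum.inl q) →
      (((p:ℕ) + 1) % l = (q:ℕ) ∨ ((q:ℕ) + 1) % l = (p:ℕ)) := by
    intro p q h
    rw [hAdjIff] at h
    rcases h.2 with h' | h'
    · simp only [hcycRel] at h'; exact Or.inl h'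
    · simp only [hcycRel] at h'; exact Or.inr h'
  have nbrF : ∀ (t : Bool) (q : Fin l), (HCyc l).Adj (Sum.inr t) (Sum.inl q) →
      (q : ℕ) = (bif t then 1 else 0) := by
    intro t q h
    rw [hAdjIff] at h
    cases t <;> rcases h.2 with h' | h' <;> simp only [hcycRel] at h' <;> exact h'
  have nbrRR : ∀ (t t' : Bool), ¬ (HCyc l).Adj (Sum.inr t) (Sum.inr t') := by
    intro t t' h
    rw [hAdjIff] at h
    cases t <;> cases t' <;> rcases h.2 with h' | h' <;> simp only [hcycRel] at h'
  have core : ∀ (p : Fin l) (w z : Fin l ⊕ Bool),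
      Sum.inl p ≠ w → (HCyc l).Adj (Sum.inl p) z → (HCyc l).Adj z w →
      seqq a b d c p0 p1 ↑p ≠
        Sum.elim (fun j : Fin l => seqq a b d c p0 p1 ↑j)
          (fun t : Bool => bif t then B else A) w := by
    rintro p (q | t) (mz | tz) hne h1 h2
    · have hp := nbrLL p mz h1
      have hq := nbrLL mz q h2
      have hpq : (p:ℕ) ≠ (q:ℕ) := fun h => hne (congrArg Sum.inl (Fin.val_injective h))
      show seqq a b d c p0 p1 ↑p ≠ seqq a b d c p0 p1 ↑q
      rcases hp with hp | hp <;> rcases hq with hq | hq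
      · have c1 := succ_mod_cases p.isLt mz.isLt hp
        have c2 := succ_mod_cases mz.isLt q.isLt hq
        exact hSd2 ↑p ↑q p.isLt q.isLt
          (by rcases c1 with h | h <;> rcases c2 with h2' | h2' <;> omega)
      · exfalso
        have c1 := succ_mod_cases p.isLt mz.isLt hp
        have c2 := succ_mod_cases q.isLt mz.isLt hq
        rcases c1 with h | h <;> rcases c2 with h2' | h2' <;> omega
      · exfalso
        have c1 := succ_mod_cases mz.isLt p.isLt hp
        have c2 := succ_mod_cases mz.isLt q.isLt hq
        rcases c1 with h | h <;> rcases c2 with h2' | h2' <;> omega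
      · have c1 := succ_mod_cases mz.isLt p.isLt hp
        have c2 := succ_mod_cases q.isLt mz.isLt hq
        exact (hSd2 ↑q ↑p q.isLt p.isLt
          (by rcases c1 with h | h <;> rcases c2 with h2' | h2' <;> omega)).symm
    · -- w = inl q, z = inr tz : p and q both the unique neighbor
      have hp := nbrF tz p h1.symm
      have hq := nbrF tz q h2
      exact ((hne (congrArg Sum.inl (Fin.val_injective (hp.trans hq.symm)))).elim)
    · -- w = inr t, z = inl mz
      have hp := nbrLL p mz h1
      have ht := nbrF t mz h2.symm
      cases t
      · simp only [Bool.cond_false] at ht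
        show seqq a b d c p0 p1 ↑p ≠ A
        rcases hp with hp | hp
        · have c1 := succ_mod_cases p.isLt mz.isLt hp
          have hpv : (p:ℕ) = l - 1 := by omega
          rw [hpv, seqq_c (by omega) (by omega)]
          exact Ne.symm hAc
        · have c1 := succ_mod_cases mz.isLt p.isLt hp
          have hpv : (p:ℕ) = 1 := by omega
          rw [hpv, seqq_1]
          exact Ne.symm hAb
      · simp only [Bool.cond_true] at ht
        show seqq a b d c p0 p1 ↑p ≠ B
        rcases hp with hp | hp
        · have c1 := succ_mod_cases p.isLt mz.isLt hp
          have hpv : (p:ℕ) = 0 := by omega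
          rw [hpv, seqq_0]
          exact Ne.symm hBa
        · have c1 := succ_mod_cases mz.isLt p.isLt hp
          have hpv : (p:ℕ) = 2 := by omega
          rw [hpv, seqq_2]
          exact Ne.symm hBd
    · exact ((nbrRR tz t h2).elim)
  have main2 : ∀ x y z : Fin l ⊕ Bool, x ≠ y →
      (HCyc l).Adj x z → (HCyc l).Adj z y →
      Sum.elim (fun j : Fin l => seqq a b d c p0 p1 ↑j)
        (fun t : Bool => bif t then B else A) x ≠
      Sum.elim (fun j : Fin l => seqq a b d c p0 p1 ↑j)
        (fun t : Bool => bif t then B else A) y := by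
    rintro (p | t) y z hne h1 h2
    · exact core p y z hne h1 h2
    · rcases y with q | t'
      · exact (core q (Sum.inr t) z (Ne.symm hne) h2.symm h1.symm).symm
      · cases z with
        | inl mz =>
          have e1 := nbrF t mz h1
          have e2 := nbrF t' mz h2.symm
          cases t <;> cases t' <;>
            simp only [Bool.cond_true, Bool.cond_false] at e1 e2 <;>
            first | exact (hne rfl).elim | omega
        | inr tz => exact ((nbrRR tz t' h2).elim)
  refine ⟨⟨?_, ?_⟩, ?_⟩
  · intro x y hxy
    have h' := (hAdjIff x y).mp hxy
    rcases h'.2 with h | h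
    · exact natAbs_of_far (main x y h)
    · exact natAbs_of_far (far_symm (main y x h))
  · intro x y hdist
    obtain ⟨hne, hnadj, z, h1, h2⟩ := common_of_dist_two hdist
    exact main2 x y z hne h1 h2
  · rintro (p | t)
    · exact seqq_le hG ha hb ↑p
    · cases t
      · exact hA
      · exact hB

def pickTable : List (ℕ × (ℕ × ℕ × ℕ × ℕ)) := [(123, (5, 4, 0, 2)), (124, (4, 4, 0, 2)), (125, (4, 4, 0, 2)), (130, (5, 3, 0, 6)), (131, (4, 3, 0, 5)), (132, (4, 3, 0, 5)), (137, (5, 3, 0, 6)), (138, (4, 3, 0, 5)), (139, (4, 3, 0, 5)), (144, (5, 3, 0, 6)), (145, (4, 3, 0, 5)), (146, (4, 3, 0, 5)), (162, (5, 4, 0, 6)), (166, (6, 4, 0, 2)), (167, (5, 4, 0, 6)), (176, (5, 2, 0, 4)), (180, (6, 6, 0, 2)), (181, (5, 2, 0, 4)), (183, (5, 2, 0, 4)), (187, (6, 4, 0, 2)), (190, (5, 2, 0, 4)), (195, (5, 2, 0, 4)), (211, (2, 3, 0, 6)), (212, (6, 3, 0, 5)), (218, (2, 2, 0, 4)), (219,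 (6, 6, 0, 2)), (223, (2, 2, 0, 4)), (232, (2, 2, 0, 4)), (233, (6, 3, 0, 5)), (237, (2, 2, 0, 4)), (239, (2, 2, 0, 4)), (244, (2, 2, 0, 4)), (260, (2, 3, 0, 6)), (261, (3, 3, 0, 5)), (267, (2, 2, 0, 4)), (269, (2, 2, 0, 4)), (274, (2, 2, 0, 4)), (275, (3, 2, 0, 4)), (276, (2, 2, 0, 4)), (288, (2, 2, 0, 4)), (289, (3, 2, 0, 4)), (290, (2, 2, 0, 4)), (309, (2, 3, 0, 6)), (310, (3, 3, 0, 6)), (311, (2, 3, 0, 6)), (312, (2, 3, 0, 6)), (316, (2, 2, 0, 4)), (317, (3, 2, 0, 4)), (318, (2, 2, 0, 4)), (319, (2, 2, 0, 4)), (323, (2, 2, 0, 4)), (324, (3, 2, 0, 4)), (325, (2, 2, 0, 4)), (326, (2, 2, 0, 4)), (330, (2, 2, 0, 4)), (331, (3, 2, 0, 4)), (332, (2, 2, 0, 4)), (333, (2, 2, 0, 4)), (518, (5, 6, 0, 4)), (523, (6, 6, 0, 2)), (524, (5, 6, 0, 4)), (525, (5, 4, 0, 6)), (530, (6, 4, 0,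 2)), (532, (5, 4, 0, 6)), (538, (5, 4, 0, 6)), (560, (6, 6, 0, 2)), (562, (6, 6, 0, 2)), (574, (6, 6, 0, 2)), (576, (6, 6, 0, 2)), (616, (2, 3, 6, 0)), (618, (3, 3, 6, 0)), (630, (2, 3, 6, 0)), (632, (3, 3, 6, 0)), (658, (2, 4, 0, 6)), (660, (3, 4, 0, 2)), (661, (2, 4, 0, 6)), (665, (3, 3, 1, 6)), (667, (3, 3, 1, 6)), (669, (3, 3, 1, 6)), (672, (2, 4, 0, 6)), (674, (3, 3, 1, 6)), (675, (2, 4, 0, 6)), (676, (2, 4, 0, 6)), (717, (4, 6, 1, 3)), (718, (6, 6, 1, 3)), (719, (4, 6, 1, 3)), (720, (4, 6, 1, 3)), (724, (4, 4, 2, 0)), (725, (6, 4, 2, 0)), (726, (4, 4, 2, 0)), (727, (4, 4, 2, 0)), (731, (4, 4, 2, 0)), (732, (6, 4, 2, 0)), (733, (4, 4, 2, 0)), (734, (4, 4, 2, 0)), (882, (6, 6, 0, 3)), (883, (0, 6, 3, 1)), (917, (6, 6, 0, 3)), (918, (0, 0, 2, 4)), (923, (0, 0, 2, 4)), (925, (0,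 0, 2, 4)), (930, (0, 0, 2, 4)), (960, (0, 0, 2, 4)), (962, (0, 0, 2, 4)), (974, (0, 0, 2, 4)), (976, (0, 0, 2, 4)), (980, (3, 4, 0, 6)), (981, (3, 4, 0, 6)), (983, (4, 4, 0, 6)), (1009, (0, 0, 2, 4)), (1011, (0, 0, 2, 4)), (1012, (0, 0, 2, 4)), (1015, (3, 4, 0, 6)), (1016, (0, 0, 2, 4)), (1018, (0, 0, 2, 4)), (1019, (0, 0, 2, 4)), (1038, (4, 6, 2, 0)), (1040, (5, 5, 3, 0)), (1041, (4, 6, 2, 0)), (1042, (4, 6, 2, 0)), (1066, (4, 6, 2, 0)), (1068, (5, 1, 3, 6)), (1069, (4, 6, 2, 0)), (1073, (5, 1, 3, 6)), (1075, (5, 1, 3, 6)), (1077, (5, 1, 3, 6)), (1082, (5, 6, 0, 2)), (1083, (4, 6, 0, 2)), (1084, (4, 6, 0, 2)), (1117, (5, 0, 2, 4)), (1118, (4, 6, 0, 2)), (1124, (5, 0, 2, 4)), (1126, (5, 0, 2, 4)), (1274, (1, 6, 3, 0)), (1276, (0, 6, 3, 1)), (1282, (0, 0, 2, 4)), (1283,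 (0, 0, 2, 4)), (1316, (1, 0, 4, 2)), (1317, (0, 0, 2, 4)), (1318, (0, 0, 2, 4)), (1323, (1, 1, 3, 6)), (1325, (1, 1, 3, 6)), (1327, (1, 1, 3, 6)), (1331, (0, 0, 2, 4)), (1332, (0, 0, 2, 4)), (1334, (0, 0, 2, 4)), (1358, (1, 1, 3, 6)), (1359, (0, 0, 2, 4)), (1360, (0, 0, 2, 4)), (1362, (0, 0, 2, 4)), (1381, (3, 2, 6, 0)), (1382, (2, 2, 4, 0)), (1384, (2, 2, 4, 0)), (1385, (2, 2, 4, 0)), (1388, (6, 6, 1, 3)), (1389, (2, 1, 6, 3)), (1391, (2, 1, 6, 3)), (1417, (2, 1, 6, 3)), (1419, (2, 1, 6, 3)), (1420, (2, 1, 6, 3)), (1424, (6, 6, 0, 3)), (1426, (6, 6, 0, 3)), (1438, (5, 0, 2, 6)), (1440, (3, 0, 6, 2)), (1470, (6, 6, 0, 3)), (1475, (6, 6, 0, 3)), (1477, (6, 0, 3, 5)), (1482, (0, 0, 3, 5)), (1483, (0, 0, 3, 5)), (1517, (0, 0, 3, 5)), (1518, (0, 0, 3, 5)), (1666, (2, 2,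 4, 6)), (1667, (0, 2, 4, 6)), (1668, (0, 2, 4, 6)), (1669, (0, 2, 4, 6)), (1673, (2, 0, 4, 6)), (1674, (0, 0, 2, 6)), (1675, (0, 0, 2, 6)), (1676, (0, 0, 2, 6)), (1680, (2, 0, 4, 6)), (1681, (0, 0, 2, 6)), (1682, (0, 0, 2, 6)), (1683, (0, 0, 2, 6)), (1724, (3, 2, 6, 0)), (1725, (2, 2, 4, 0)), (1726, (2, 2, 4, 0)), (1728, (2, 2, 4, 0)), (1731, (3, 3, 1, 6)), (1733, (3, 3, 1, 6)), (1735, (3, 3, 1, 6)), (1739, (2, 2, 4, 0)), (1740, (2, 2, 4, 0)), (1742, (2, 2, 4, 0)), (1768, (3, 2, 0, 4)), (1770, (3, 2, 0, 4)), (1782, (3, 0, 6, 2)), (1784, (3, 0, 6, 2)), (1824, (0, 0, 3, 6)), (1826, (0, 0, 3, 6)), (1838, (0, 0, 3, 6)), (1840, (0, 0, 3, 6)), (1862, (1, 2, 4, 0)), (1868, (0, 2, 4, 6)), (1870, (0, 0, 2, 4)), (1875, (0, 0, 2, 4)), (1876, (1, 0, 4, 2)), (1877, (0, 0, 2, 4)),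 (1882, (0, 0, 2, 4)), (2067, (3, 2, 6, 0)), (2068, (2, 2, 4, 0)), (2069, (2, 2, 4, 0)), (2070, (2, 2, 4, 0)), (2074, (3, 3, 6, 0)), (2075, (2, 1, 6, 3)), (2076, (2, 1, 6, 3)), (2077, (2, 1, 6, 3)), (2081, (3, 2, 6, 0)), (2082, (2, 1, 6, 3)), (2083, (2, 1, 6, 3)), (2084, (2, 1, 6, 3)), (2088, (3, 2, 6, 0)), (2089, (2, 1, 6, 3)), (2090, (2, 1, 6, 3)), (2091, (2, 1, 6, 3)), (2110, (4, 2, 6, 0)), (2111, (3, 2, 6, 4)), (2112, (3, 2, 6, 4)), (2124, (4, 0, 6, 3)), (2125, (3, 0, 6, 2)), (2126, (3, 0, 6, 2)), (2131, (4, 0, 6, 3)), (2133, (3, 0, 6, 2)), (2139, (3, 0, 6, 2)), (2140, (3, 0, 6, 2)), (2156, (4, 1, 6, 3)), (2161, (0, 3, 6, 1)), (2163, (4, 0, 6, 3)), (2167, (0, 0, 3, 5)), (2168, (0, 0, 3, 5)), (2177, (4, 0, 6, 3)), (2181, (0, 0, 3, 5)), (2182, (0, 0, 3, 5)), (2188,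 (0, 0, 3, 5)), (2189, (0, 0, 3, 5)), (2205, (1, 1, 6, 3)), (2210, (0, 2, 6, 4)), (2213, (0, 0, 4, 2)), (2217, (0, 0, 4, 2)), (2219, (1, 0, 4, 2)), (2220, (0, 0, 4, 2)), (2224, (0, 0, 4, 2)), (2233, (1, 0, 4, 2)), (2234, (0, 0, 4, 2)), (2238, (0, 0, 4, 2)), (2254, (1, 2, 6, 0)), (2255, (0, 2, 6, 4)), (2256, (0, 2, 6, 4)), (2261, (1, 0, 6, 2)), (2262, (0, 0, 3, 5)), (2263, (0, 0, 3, 5)), (2268, (1, 0, 6, 2)), (2269, (0, 0, 3, 5)), (2270, (0, 0, 3, 5)), (2275, (1, 0, 6, 2)), (2276, (0, 0, 3, 5)), (2277, (0, 0, 3, 5))]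

def pick (a b f0 f3 : ℕ) : ℕ × ℕ × ℕ × ℕ :=
  (pickTable.lookup (((a*7+b)*7+f0)*7+f3)).getD (0,0,0,0)

set_option maxRecDepth 100000 in
set_option maxHeartbeats 8000000 in
set_option synthInstance.maxHeartbeats 400000 in
set_option synthInstance.maxSize 100000 in
lemma key : ∀ a b f0 f3 : Fin 7,
    far a b → far f0 a → (f0:ℕ) ≠ b → far f3 b → (f3:ℕ) ≠ a →
    (∃ s : Fin 7, far s a ∧ far s b ∧ (s:ℕ) ≠ f0 ∧ (s:ℕ) ≠ f3) →
    Good a b f0 f3 (pick a b f0 f3).1 (pick a b f0 f3).2.1 (pick a b f0 f3).2.2.1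
      (pick a b f0 f3).2.2.2 := by decide


theorem stmt16 (l : ℕ) (hl : 4 ≤ l) (h3 : l % 3 = 0) (f : Fin 4 → ℕ)
    (hf : PathExtendable 2 f)
    (hmid : f 1 = 1 ∨ f 1 = 3 ∨ f 1 = 5 ∨ f 2 = 1 ∨ f 2 = 3 ∨ f 2 = 5) :
    ∃ f1 : Fin l ⊕ Bool → ℕ,
      IsKL21Labeling (HCyc l) 6 f1 ∧
      f1 (Sum.inr false) = f 0 ∧
      f1 (Sum.inl ⟨0, by omega⟩) = f 1 ∧
      f1 (Sum.inl ⟨1, by omega⟩) = f 2 ∧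
      f1 (Sum.inr true) = f 3 ∧
      PathExtendable (l - 2)
        (fun m : Fin (l - 2 + 2) => f1 (Sum.inl ⟨((m : ℕ) + 1) % l, Nat.mod_lt _ (by omega)⟩)) := by
  have hl6 : 6 ≤ l := by omega
  obtain ⟨⟨⟨hadjP, hdistP⟩, hleP⟩, hext⟩ := hf
  have hPAdjIff : ∀ x y : Fin 4, (PathGraph 4).Adj x y ↔
      x ≠ y ∧ ((x:ℕ) + 1 = (y:ℕ) ∨ (y:ℕ) + 1 = (x:ℕ)) :=
    fun x y => SimpleGraph.fromRel_adj _ x y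
  have adj01 : (PathGraph 4).Adj 0 1 := (hPAdjIff 0 1).mpr (by decide)
  have adj12 : (PathGraph 4).Adj 1 2 := (hPAdjIff 1 2).mpr (by decide)
  have adj23 : (PathGraph 4).Adj 2 3 := (hPAdjIff 2 3).mpr (by decide)
  have h01 : far (f 0) (f 1) := far_of_natAbs (hadjP 0 1 adj01)
  have h12 : far (f 1) (f 2) := far_of_natAbs (hadjP 1 2 adj12)
  have h23 : far (f 2) (f 3) := far_of_natAbs (hadjP 2 3 adj23)
  have na02 : ¬ (PathGraph 4).Adj 0 2 := fun h => absurd ((hPAdjIff 0 2).mp h) (by decide)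
  have na13 : ¬ (PathGraph 4).Adj 1 3 := fun h => absurd ((hPAdjIff 1 3).mp h) (by decide)
  have h02 : f 0 ≠ f 2 := hdistP 0 2 (dist_two_of (by decide) na02 adj01 adj12)
  have h13 : f 1 ≠ f 3 := hdistP 1 3 (dist_two_of (by decide) na13 adj12 adj23)
  -- extract the length-2 attachment label
  have hD0 : ValidD 2 (fun i => if i = 1 then some false else none) := by
    constructor
    · intro i hi
      by_cases h : i = 1
      · omega
      · simp [h] at hi
    · rintro i ⟨hi1, hi2⟩
      by_cases h : i = 1
      · subst h; simp at hi2
      · simp [h] at hi1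
  obtain ⟨g, ⟨⟨gadj, gdist⟩, gle⟩, gagree⟩ :=
    hext (fun i => if i = 1 then some false else none) hD0
  have hwact : Sum.inr (1, false) ∈
      {w : PVert 2 | Active (fun i => if i = 1 then some false else none) w} :=
    ⟨by simp, Or.inl rfl⟩
  have hAAdjIff : ∀ x y : PVert 2,
      (AttachG 2 (fun i => if i = 1 then some false else none)).Adj x y ↔
      x ≠ y ∧ (attachRel 2 (fun i => if i = 1 then some false else none) x y ∨
        attachRel 2 (fun i => if i = 1 then some false else none) y x) :=
    fun x y => SimpleGraph.fromRel_adj _ x y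
  have adjW1 : (AttachG 2 (fun i => if i = 1 then some false else none)).Adj
      (Sum.inr (1, false)) (Sum.inl 1) :=
    (hAAdjIff _ _).mpr ⟨by simp, Or.inr (by simp [attachRel])⟩
  have adjW2 : (AttachG 2 (fun i => if i = 1 then some false else none)).Adj
      (Sum.inr (1, false)) (Sum.inl 2) :=
    (hAAdjIff _ _).mpr ⟨by simp, Or.inr (by simp [attachRel])⟩
  have adj10 : (AttachG 2 (fun i => if i = 1 then some false else none)).Adj
      (Sum.inl 1) (Sum.inl 0) :=
    (hAAdjIff _ _).mpr ⟨by decide, Or.inr (by simp only [attachRel]; decide)⟩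
  have adj23' : (AttachG 2 (fun i => if i = 1 then some false else none)).Adj
      (Sum.inl 2) (Sum.inl 3) :=
    (hAAdjIff _ _).mpr ⟨by decide, Or.inl (by simp only [attachRel]; decide)⟩
  have naW0 : ¬ (AttachG 2 (fun i => if i = 1 then some false else none)).Adj
      (Sum.inr (1, false)) (Sum.inl 0) := by
    intro h
    rcases ((hAAdjIff _ _).mp h).2 with h' | h'
    · simp only [attachRel] at h'
    · simp only [attachRel] at h'
      rcases h' with ⟨h'', -⟩ | ⟨h'', -⟩ <;> exact absurd h'' (by decide)
  have naW3 : ¬ (AttachG 2 (fun i => if i = 1 then some false else none)).Adj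
      (Sum.inr (1, false)) (Sum.inl 3) := by
    intro h
    rcases ((hAAdjIff _ _).mp h).2 with h' | h'
    · simp only [attachRel] at h'
    · simp only [attachRel] at h'
      rcases h' with ⟨h'', -⟩ | ⟨h'', -⟩ <;> exact absurd h'' (by decide)
  have hfar1 : far (g ⟨Sum.inr (1, false), hwact⟩) (f 1) := by
    have := gadj ⟨Sum.inr (1, false), hwact⟩ ⟨Sum.inl 1, trivial⟩ adjW1
    rw [gagree 1] at this
    exact far_of_natAbs this
  have hfar2 : far (g ⟨Sum.inr (1, false), hwact⟩) (f 2) := by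
    have := gadj ⟨Sum.inr (1, false), hwact⟩ ⟨Sum.inl 2, trivial⟩ adjW2
    rw [gagree 2] at this
    exact far_of_natAbs this
  have hcf0 : g ⟨Sum.inr (1, false), hwact⟩ ≠ f 0 := by
    have hd : ((AttachG 2 (fun i => if i = 1 then some false else none)).induce
        {w : PVert 2 | Active (fun i => if i = 1 then some false else none) w}).dist
        ⟨Sum.inr (1, false), hwact⟩ ⟨Sum.inl 0, trivial⟩ = 2 :=
      dist_two_of (fun h => Sum.inr_ne_inl (congrArg Subtype.val h)) (fun h => naW0 h)
        (z := ⟨Sum.inl 1, trivial⟩) adjW1 adj10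
    have := gdist _ _ hd
    rwa [gagree 0] at this
  have hcf3 : g ⟨Sum.inr (1, false), hwact⟩ ≠ f 3 := by
    have hd : ((AttachG 2 (fun i => if i = 1 then some false else none)).induce
        {w : PVert 2 | Active (fun i => if i = 1 then some false else none) w}).dist
        ⟨Sum.inr (1, false), hwact⟩ ⟨Sum.inl 3, trivial⟩ = 2 :=
      dist_two_of (fun h => Sum.inr_ne_inl (congrArg Subtype.val h)) (fun h => naW3 h)
        (z := ⟨Sum.inl 2, trivial⟩) adjW2 adj23'
    have := gdist _ _ hd
    rwa [gagree 3] at this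
  have hcle : g ⟨Sum.inr (1, false), hwact⟩ ≤ 6 := gle _
  -- get the pattern from the lookup table
  have hkey : Good (f 1) (f 2) (f 0) (f 3)
      (pick (f 1) (f 2) (f 0) (f 3)).1 (pick (f 1) (f 2) (f 0) (f 3)).2.1
      (pick (f 1) (f 2) (f 0) (f 3)).2.2.1 (pick (f 1) (f 2) (f 0) (f 3)).2.2.2 :=
    key ⟨f 1, by have := hleP 1; omega⟩ ⟨f 2, by have := hleP 2; omega⟩
      ⟨f 0, by have := hleP 0; omega⟩ ⟨f 3, by have := hleP 3; omega⟩
      h12 h01 h02 (far_symm h23) (Ne.symm h13)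
      ⟨⟨g ⟨Sum.inr (1, false), hwact⟩, by omega⟩, hfar1, hfar2, hcf0, hcf3⟩
  set dd := (pick (f 1) (f 2) (f 0) (f 3)).1 with hdd
  set cc := (pick (f 1) (f 2) (f 0) (f 3)).2.1 with hcc
  set pp0 := (pick (f 1) (f 2) (f 0) (f 3)).2.2.1 with hpp0
  set pp1 := (pick (f 1) (f 2) (f 0) (f 3)).2.2.2 with hpp1
  have hAc : f 0 ≠ cc := hkey.2.2.2.2.2.2.2.2.2.2.2.2.2.2.2.1
  have hBd : f 3 ≠ dd := hkey.2.2.2.2.2.2.2.2.2.2.2.2.2.2.2.2.1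
  have hSadj := seqq_adj (A := f 0) (B := f 3) (a := f 1) (b := f 2)
    (d := dd) (c := cc) (p0 := pp0) (p1 := pp1) hl6 h3 hkey h12
  have hSd2 := seqq_d2 (A := f 0) (B := f 3) (a := f 1) (b := f 2)
    (d := dd) (c := cc) (p0 := pp0) (p1 := pp1) hl6 h3 hkey
  have hSwin := seqq_win (A := f 0) (B := f 3) (a := f 1) (b := f 2)
    (d := dd) (c := cc) (p0 := pp0) (p1 := pp1) hl6 h3 hkey
  have hsle : ∀ j : ℕ, seqq (f 1) (f 2) dd cc pp0 pp1 ((j+1) % l) ≤ 6 :=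
    fun j => seqq_le hkey (hleP 1) (hleP 2) _
  have hsadj : ∀ j, j + 2 ≤ l - 2 + 2 →
      far (seqq (f 1) (f 2) dd cc pp0 pp1 ((j+1) % l))
        (seqq (f 1) (f 2) dd cc pp0 pp1 ((j+1+1) % l)) := by
    intro j hj
    have e1 : (j+1) % l = j+1 := Nat.mod_eq_of_lt (by omega)
    by_cases e : j + 1 + 1 = l
    · rw [e1, show (j+1+1) % l = 0 by rw [e]; exact Nat.mod_self l]
      exact hSadj (j+1) 0 (by omega) (by omega) (by omega)
    · rw [e1, show (j+1+1) % l = j+2 by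
        rw [show j+1+1 = j+2 by omega]; exact Nat.mod_eq_of_lt (by omega)]
      exact hSadj (j+1) (j+2) (by omega) (by omega) (by omega)
  have hsd2 : ∀ j, j + 3 ≤ l - 2 + 2 →
      seqq (f 1) (f 2) dd cc pp0 pp1 ((j+1) % l) ≠
      seqq (f 1) (f 2) dd cc pp0 pp1 ((j+2+1) % l) := by
    intro j hj
    have e1 : (j+1) % l = j+1 := Nat.mod_eq_of_lt (by omega)
    by_cases e : j + 2 + 1 = l
    · rw [e1, show (j+2+1) % l = 0 by rw [e]; exact Nat.mod_self l]
      exact hSd2 (j+1) 0 (by omega) (by omega) (by omega)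
    · rw [e1, show (j+2+1) % l = j+3 by
        rw [show j+2+1 = j+3 by omega]; exact Nat.mod_eq_of_lt (by omega)]
      exact hSd2 (j+1) (j+3) (by omega) (by omega) (by omega)
  have hswin : ∀ i, 1 ≤ i → i + 1 ≤ l - 2 →
      Win (seqq (f 1) (f 2) dd cc pp0 pp1 ((i-1+1) % l))
        (seqq (f 1) (f 2) dd cc pp0 pp1 ((i+1) % l))
        (seqq (f 1) (f 2) dd cc pp0 pp1 ((i+1+1) % l))
        (seqq (f 1) (f 2) dd cc pp0 pp1 ((i+2+1) % l)) := by
    intro i hi1 hi2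
    have e0 : (i - 1 + 1) % l = i := by
      rw [show i - 1 + 1 = i by omega]; exact Nat.mod_eq_of_lt (by omega)
    have e1 : (i + 1) % l = i + 1 := Nat.mod_eq_of_lt (by omega)
    have e2 : (i + 1 + 1) % l = i + 2 := by
      rw [show i+1+1 = i+2 by omega]; exact Nat.mod_eq_of_lt (by omega)
    rw [e0, e1, e2]
    by_cases e : i + 2 + 1 = l
    · rw [show (i+2+1) % l = 0 by rw [e]; exact Nat.mod_self l]
      have := hSwin (i+1) 0 (by omega) (by omega) (Or.inr ⟨by omega, rfl⟩)
      rwa [show i + 1 - 1 = i by omega] at this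
    · rw [show (i+2+1) % l = i+3 by
        rw [show i+2+1 = i+3 by omega]; exact Nat.mod_eq_of_lt (by omega)]
      have := hSwin (i+1) (i+3) (by omega) (by omega) (Or.inl ⟨by omega, by omega⟩)
      rwa [show i + 1 - 1 = i by omega] at this
  refine ⟨Sum.elim (fun j : Fin l => seqq (f 1) (f 2) dd cc pp0 pp1 ↑j)
      (fun t : Bool => bif t then f 3 else f 0), ?_, rfl, ?_, ?_, rfl, ?_, ?_⟩
  · exact cycLab l hl6 h3 (f 1) (f 2) dd cc pp0 pp1 (f 0) (f 3) hkey
      (hleP 1) (hleP 2) (hleP 0) (hleP 3) h12 h01 h02 (far_symm h23) (Ne.symm h13) hAc hBd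
  · show seqq (f 1) (f 2) dd cc pp0 pp1 0 = f 1
    rfl
  · show seqq (f 1) (f 2) dd cc pp0 pp1 1 = f 2
    rfl
  · exact pathLab (l - 2 + 2) (fun j : ℕ => seqq (f 1) (f 2) dd cc pp0 pp1 ((j+1) % l))
      hsle hsadj hsd2
  · intro D hD
    exact extendAttach (l - 2) (fun j : ℕ => seqq (f 1) (f 2) dd cc pp0 pp1 ((j+1) % l))
      hsle hsadj hsd2 hswin D hD
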